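/- The Hermitian curve x^{q+1} + y^{q+1} + z^{q+1} = 0 has exactly 1 + q^2 + 2q·g rational points over F_{q^2}, where g = q(q−1)/2 is its genus; i.e., its number of F_{q^2}-points equals q^3 + 1. -/

import Mathlib

open Projectivization
open scoped LinearAlgebra.Projectivization

section Hermitian

variable {K : Type*} [Field K] [Fintype K] {q : ℕ}

private theorem herm_units (hK : Fintype.card K = q ^ 2) (hq2 : 2 ≤ q) :
    Nat.card {x : Kˣ // x ^ (q + 1) = 1} = q + 1 ∧
    ∀ t : Kˣ, t ^ (q - 1) = 1 → ∃ x : Kˣ, x ^ (q + 1) = t := by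
  classical
  have hcard : Fintype.card Kˣ = q ^ 2 - 1 := by rw [Fintype.card_units, hK]
  have hfact : (q + 1) * (q - 1) = q ^ 2 - 1 := by
    obtain ⟨r, rfl⟩ : ∃ r, q = r + 2 := ⟨q - 2, by omega⟩
    have h1 : (r + 2 + 1) * (r + 2 - 1) = r * r + 4 * r + 3 := by
      have e : r + 2 - 1 = r + 1 := by omega
      rw [e]; ring
    have h2 : (r + 2) ^ 2 = r * r + 4 * r + 4 := by ring
    omega
  set φ : Kˣ →* Kˣ := powMonoidHom (q + 1) with hφ
  have hker_le : Fintype.card {x : Kˣ // x ^ (q + 1) = 1} ≤ q + 1 := by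
    rw [Fintype.card_subtype]
    have := card_nthRoots_subgroup_units (Units.coeHom K) (fun _ _ h => Units.ext h)
      (n := q + 1) (by omega) 1
    simpa using this.trans (Polynomial.card_nthRoots (q + 1) 1)
  have hR_le : Fintype.card {x : Kˣ // x ^ (q - 1) = 1} ≤ q - 1 := by
    rw [Fintype.card_subtype]
    have := card_nthRoots_subgroup_units (Units.coeHom K) (fun _ _ h => Units.ext h)
      (n := q - 1) (by omega) 1
    simpa using this.trans (Polynomial.card_nthRoots (q - 1) 1)
  have hlag : Nat.card Kˣ = Nat.card φ.range * Nat.card φ.ker := by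
    rw [Subgroup.card_eq_card_quotient_mul_card_subgroup φ.ker,
      Nat.card_congr (QuotientGroup.quotientKerEquivRange φ).toEquiv]
  have hkerc : Nat.card φ.ker = Nat.card {x : Kˣ // x ^ (q + 1) = 1} :=
    Nat.card_congr (Equiv.subtypeEquivRight fun x => by
      simp [hφ, MonoidHom.mem_ker, powMonoidHom_apply])
  -- the range lands in the (q-1)-st roots of unity
  have hmem : ∀ x : Kˣ, x ∈ φ.range → x ^ (q - 1) = 1 := by
    intro x hx
    obtain ⟨y, hy⟩ := hx
    have : x ^ (q - 1) = y ^ (q ^ 2 - 1) := by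
      rw [← hy]; simp only [hφ, powMonoidHom_apply, ← pow_mul, hfact]
    rw [this, ← hcard, pow_card_eq_one]
  set i : φ.range → {x : Kˣ // x ^ (q - 1) = 1} := fun x => ⟨x.1, hmem x.1 x.2⟩ with hi
  have hinj : Function.Injective i := by
    intro a b hab
    simp only [hi, Subtype.mk.injEq] at hab
    exact Subtype.ext hab
  have hrange_le : Nat.card φ.range ≤ Fintype.card {x : Kˣ // x ^ (q - 1) = 1} := by
    rw [Nat.card_eq_fintype_card]
    exact Fintype.card_le_of_injective i hinj
  have hmul : Nat.card φ.range * Nat.card φ.ker = (q - 1) * (q + 1) := by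
    rw [← hlag, Nat.card_eq_fintype_card, hcard]
    obtain ⟨r, rfl⟩ : ∃ r, q = r + 2 := ⟨q - 2, by omega⟩
    have h1 : (r + 2 - 1) * (r + 2 + 1) = r * r + 4 * r + 3 := by
      have e : r + 2 - 1 = r + 1 := by omega
      rw [e]; ring
    have h2 : (r + 2) ^ 2 = r * r + 4 * r + 4 := by ring
    omega
  have h1 : Nat.card φ.ker ≤ q + 1 := by
    rw [hkerc, Nat.card_eq_fintype_card]; exact hker_le
  have h2 : Nat.card φ.range ≤ q - 1 := hrange_le.trans hR_le
  have hbq : Nat.card φ.range * (q + 1) = (q - 1) * (q + 1) :=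
    le_antisymm (Nat.mul_le_mul_right _ h2)
      (hmul ▸ Nat.mul_le_mul_left _ h1)
  have hb : Nat.card φ.range = q - 1 := Nat.eq_of_mul_eq_mul_right (by omega) hbq
  have ha : Nat.card φ.ker = q + 1 := by
    rw [hb] at hmul
    exact Nat.eq_of_mul_eq_mul_left (by omega) hmul
  refine ⟨by rw [← hkerc]; exact ha, ?_⟩
  -- surjectivity of i
  have hsurj : Function.Surjective i := by
    by_contra hcon
    have := Fintype.card_lt_of_injective_not_surjective i hinj hcon
    rw [← Nat.card_eq_fintype_card (α := φ.range), hb] at this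
    omega
  intro t ht
  obtain ⟨⟨x, hx⟩, hxt⟩ := hsurj ⟨t, ht⟩
  obtain ⟨y, hy⟩ := hx
  refine ⟨y, ?_⟩
  have : x = t := congrArg Subtype.val hxt
  rw [← this, ← hy]; rfl

end Hermitian

section Hermitian2

variable {K : Type*} [Field K] [Fintype K] {q : ℕ}

private theorem herm_pow_mem (hK : Fintype.card K = q ^ 2) (x : K) :
    (x ^ (q + 1)) ^ q = x ^ (q + 1) := by
  rw [← pow_mul]
  have h : (q + 1) * q = q ^ 2 + q := by ring
  rw [h, pow_add, ← hK, FiniteField.pow_card, pow_succ, mul_comm]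

private theorem herm_fiber0 (hq2 : 2 ≤ q) :
    Nat.card {x : K // x ^ (q + 1) = 0} = 1 := by
  classical
  have e : {x : K // x ^ (q + 1) = 0} ≃ {x : K // x = 0} :=
    Equiv.subtypeEquivRight fun x => by
      rw [pow_eq_zero_iff (by omega : q + 1 ≠ 0)]
  rw [Nat.card_congr e, Nat.card_eq_fintype_card, Fintype.card_subtype_eq]

private theorem herm_fiber (hK : Fintype.card K = q ^ 2) (hq2 : 2 ≤ q) {t : K}
    (ht : t ^ q = t) (ht0 : t ≠ 0) :
    Nat.card {x : K // x ^ (q + 1) = t} = q + 1 := by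
  classical
  · set tu : Kˣ := Units.mk0 t ht0 with htu
    have htu1 : tu ^ (q - 1) = 1 := by
      apply Units.ext
      push_cast
      have h1 : t ^ (q - 1) * t = t ^ q := by
        rw [← pow_succ]; congr 1; omega
      have h2 : t ^ (q - 1) * t = 1 * t := by rw [h1, ht, one_mul]
      simpa [htu] using mul_right_cancel₀ ht0 h2
    obtain ⟨x0, hx0⟩ := (herm_units hK hq2).2 tu htu1
    have hg : Function.Bijective (fun y : {y : Kˣ // y ^ (q + 1) = 1} =>
        (⟨((y.1 * x0 : Kˣ) : K), by
          have : ((y.1 * x0) ^ (q + 1) : Kˣ) = tu := by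
            rw [mul_pow, y.2, one_mul, hx0]
          have := congrArg Units.val this
          push_cast at this
          simpa [htu] using this⟩ : {x : K // x ^ (q + 1) = t})) := by
      constructor
      · rintro ⟨y, hy⟩ ⟨y', hy'⟩ h
        simp only [Subtype.mk.injEq] at h
        have : (y * x0 : Kˣ) = y' * x0 := Units.ext h
        exact Subtype.ext (mul_right_cancel this)
      · rintro ⟨x, hx⟩
        have hxne : x ≠ 0 := fun h => ht0 (by
          rw [← hx, h, zero_pow (by omega : q + 1 ≠ 0)])
        set u : Kˣ := Units.mk0 x hxne with hu
        have hupow : u ^ (q + 1) = tu := by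
          apply Units.ext; push_cast [hu, htu]; exact hx
        refine ⟨⟨u * x0⁻¹, ?_⟩, ?_⟩
        · rw [mul_pow, hupow, inv_pow, hx0, mul_inv_cancel]
        · apply Subtype.ext
          simp [hu]
    rw [Nat.card_congr (Equiv.ofBijective _ hg).symm]
    exact (herm_units hK hq2).1

private theorem herm_card_T (hK : Fintype.card K = q ^ 2) (hq2 : 2 ≤ q) :
    Nat.card {t : K // t ^ q = t} = q := by
  classical
  set FT : Finset K := Finset.univ.filter (fun t => t ^ q = t) with hFT
  have hpart : (Finset.univ : Finset K).card =
      ∑ t ∈ FT, (Finset.univ.filter fun x : K => x ^ (q + 1) = t).card :=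
    Finset.card_eq_sum_card_fiberwise (f := fun x : K => x ^ (q + 1))
      (fun x _ => by simp [hFT, herm_pow_mem hK x])
  have h0 : (0 : K) ∈ FT := by simp [hFT, zero_pow (by omega : q ≠ 0)]
  have hfib : ∀ t ∈ FT, (Finset.univ.filter fun x : K => x ^ (q + 1) = t).card
      = Nat.card {x : K // x ^ (q + 1) = t} := fun t _ => by
    rw [Nat.card_eq_fintype_card, Fintype.card_subtype]
  have hsum : q ^ 2 = 1 + (FT.card - 1) * (q + 1) := by
    rw [← hK, ← Finset.card_univ, hpart, ← Finset.add_sum_erase _ _ h0]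
    congr 1
    · rw [hfib 0 h0, herm_fiber0 hq2]
    · rw [Finset.sum_congr rfl (fun t htm => by
        rw [hfib t (Finset.mem_of_mem_erase htm),
          herm_fiber hK hq2 (by simpa [hFT] using Finset.mem_of_mem_erase htm)
            (Finset.ne_of_mem_erase htm)])]
      rw [Finset.sum_const, Finset.card_erase_of_mem h0, smul_eq_mul]
  have hcardT : Nat.card {t : K // t ^ q = t} = FT.card := by
    rw [Nat.card_eq_fintype_card, Fintype.card_subtype]
  rw [hcardT]
  have hq2' : q ^ 2 = q * q := sq q
  have h1 : 1 ≤ FT.card := Finset.card_pos.mpr ⟨0, h0⟩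
  -- (FT.card - 1) * (q + 1) = q^2 - 1 = (q - 1) * (q + 1)
  have h2 : (FT.card - 1) * (q + 1) = (q - 1) * (q + 1) := by
    have h3 : (q - 1) * (q + 1) = q ^ 2 - 1 := by
      obtain ⟨r, rfl⟩ : ∃ r, q = r + 2 := ⟨q - 2, by omega⟩
      have e : r + 2 - 1 = r + 1 := by omega
      rw [e]
      have e2 : (r + 2) ^ 2 = r * r + 4 * r + 4 := by ring
      have e3 : (r + 1) * (r + 2 + 1) = r * r + 4 * r + 3 := by ring
      omega
    omega
  have := Nat.eq_of_mul_eq_mul_right (by omega : 0 < q + 1) h2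
  omega

private theorem herm_T_closed (hPP : ∃ p k : ℕ, p.Prime ∧ 0 < k ∧ p ^ k = q)
    (hK : Fintype.card K = q ^ 2) {a b : K} (ha : a ^ q = a) (hb : b ^ q = b) :
    (-(a + b)) ^ q = -(a + b) := by
  obtain ⟨p, k, hp, hk, rfl⟩ := hPP
  haveI : Fact p.Prime := ⟨hp⟩
  haveI : CharP K p := by
    obtain ⟨p', hcp⟩ := CharP.exists K
    haveI := hcp
    have hp' : p'.Prime := CharP.char_is_prime K p'
    haveI : Fact p'.Prime := ⟨hp'⟩
    obtain ⟨n, hn⟩ := FiniteField.card K p'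
    have hdvd : p' ∣ (p ^ k) ^ 2 := by
      rw [← hK, hn.2]; exact dvd_pow_self p' (by positivity)
    have : p' = p := (Nat.prime_dvd_prime_iff_eq hp' hp).mp
      (hp'.dvd_of_dvd_pow (hp'.dvd_of_dvd_pow hdvd))
    rwa [← this]
  have hsub : ∀ x y : K, (x - y) ^ p ^ k = x ^ p ^ k - y ^ p ^ k := fun x y =>
    sub_pow_char_pow x y k
  have hadd : (a + b) ^ p ^ k = a + b := by
    rw [add_pow_char_pow, ha, hb]
  calc (-(a + b)) ^ p ^ k = (0 - (a + b)) ^ p ^ k := by rw [zero_sub]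
    _ = 0 ^ p ^ k - (a + b) ^ p ^ k := hsub 0 (a + b)
    _ = -(a + b) := by
        rw [hadd, zero_pow (pow_ne_zero k hp.pos.ne'), zero_sub]

private theorem card_filter_pi {K : Type*} [Fintype K] [DecidableEq K]
    (P0 P1 P2 : K → Prop) [DecidablePred P0] [DecidablePred P1] [DecidablePred P2] :
    (Finset.univ.filter fun v : Fin 3 → K => P0 (v 0) ∧ P1 (v 1) ∧ P2 (v 2)).card =
      (Finset.univ.filter P0).card * ((Finset.univ.filter P1).card *
        (Finset.univ.filter P2).card) := by
  rw [← Finset.card_product, ← Finset.card_product]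
  apply Finset.card_bij' (fun v _ => (v 0, v 1, v 2)) (fun t _ => ![t.1, t.2.1, t.2.2])
  · intro v hv
    simp only [Finset.mem_filter, Finset.mem_univ, true_and] at hv
    simp [Finset.mem_product, hv.1, hv.2.1, hv.2.2]
  · intro t ht
    simp only [Finset.mem_product, Finset.mem_filter, Finset.mem_univ, true_and] at ht
    simp [ht.1, ht.2.1, ht.2.2]
  · intro v _
    funext i
    fin_cases i <;> rfl
  · intro t _
    rfl

private theorem herm_arith : ∀ m : ℕ, 2 ≤ m → 1 + (m - 1) * ((m + 1) * (m + 1))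
    + (m - 1) * ((m + 1) * ((m + 1) + ((m + 1) + (m - 2) * ((m + 1) * (m + 1)))))
    = 1 + (m ^ 2 - 1) * (m ^ 3 + 1) := by
  intro m hm
  obtain ⟨r, rfl⟩ : ∃ r, m = r + 2 := ⟨m - 2, by omega⟩
  have e1 : r + 2 - 1 = r + 1 := by omega
  have e2 : r + 2 - 2 = r := by omega
  rw [e1, e2]
  have e3 : (r + 2) ^ 2 - 1 = r * r + 4 * r + 3 := by
    have : (r + 2) ^ 2 = r * r + 4 * r + 4 := by ring
    omega
  rw [e3]
  ring

private theorem herm_affine (hPP : ∃ p k : ℕ, p.Prime ∧ 0 < k ∧ p ^ k = q)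
    (hK : Fintype.card K = q ^ 2) (hq2 : 2 ≤ q) :
    Nat.card {v : Fin 3 → K //
        v 0 ^ (q + 1) + v 1 ^ (q + 1) + v 2 ^ (q + 1) = 0}
      = 1 + (q ^ 2 - 1) * (q ^ 3 + 1) := by
  classical
  rw [Nat.card_eq_fintype_card, Fintype.card_subtype]
  set n : K → ℕ := fun t => (Finset.univ.filter fun x : K => x ^ (q + 1) = t).card with hn
  have n0 : n 0 = 1 := by
    rw [hn]
    have := herm_fiber0 (K := K) hq2
    rwa [Nat.card_eq_fintype_card, Fintype.card_subtype] at this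
  have nt : ∀ t : K, t ^ q = t → t ≠ 0 → n t = q + 1 := by
    intro t htq ht0
    have := herm_fiber hK hq2 htq ht0
    rwa [Nat.card_eq_fintype_card, Fintype.card_subtype] at this
  set FT : Finset K := Finset.univ.filter (fun t => t ^ q = t) with hFT
  have hmemFT : ∀ t : K, t ∈ FT ↔ t ^ q = t := fun t => by simp [hFT]
  have h0FT : (0 : K) ∈ FT := by simp [hFT, zero_pow (by omega : q ≠ 0)]
  have hcardFT : FT.card = q := by
    have := herm_card_T (K := K) hK hq2
    rwa [Nat.card_eq_fintype_card, Fintype.card_subtype] at this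
  set S : Finset (Fin 3 → K) := Finset.univ.filter (fun v =>
    v 0 ^ (q + 1) + v 1 ^ (q + 1) + v 2 ^ (q + 1) = 0) with hS
  have hpart : S.card = ∑ p ∈ FT ×ˢ FT,
      (S.filter fun v => (v 0 ^ (q + 1), v 1 ^ (q + 1)) = p).card := by
    apply Finset.card_eq_sum_card_fiberwise
    intro v _
    simp [Finset.mem_product, hmemFT, herm_pow_mem hK]
  have hfib : ∀ a ∈ FT, ∀ b ∈ FT,
      (S.filter fun v => (v 0 ^ (q + 1), v 1 ^ (q + 1)) = (a, b)).card
        = n a * (n b * n (-(a + b))) := by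
    intro a _ b _
    have : (S.filter fun v => (v 0 ^ (q + 1), v 1 ^ (q + 1)) = (a, b))
        = Finset.univ.filter fun v : Fin 3 → K =>
            v 0 ^ (q + 1) = a ∧ v 1 ^ (q + 1) = b ∧ v 2 ^ (q + 1) = -(a + b) := by
      ext v
      simp only [hS, Finset.mem_filter, Finset.mem_univ, true_and, Prod.mk.injEq]
      constructor
      · rintro ⟨h1, h2, h3⟩
        refine ⟨h2, h3, ?_⟩
        rw [h2, h3] at h1
        linear_combination h1
      · rintro ⟨h1, h2, h3⟩
        refine ⟨?_, h1, h2⟩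
        rw [h1, h2, h3]; ring
    rw [this, card_filter_pi (fun x => x ^ (q + 1) = a) (fun x => x ^ (q + 1) = b)
      (fun x => x ^ (q + 1) = -(a + b))]
  have hsum : S.card = ∑ a ∈ FT, ∑ b ∈ FT, n a * (n b * n (-(a + b))) := by
    rw [hpart, Finset.sum_product]
    exact Finset.sum_congr rfl fun a ha => Finset.sum_congr rfl fun b hb => hfib a ha b hb
  -- evaluate the double sum
  have hclosed : ∀ a b : K, a ∈ FT → b ∈ FT → (-(a + b)) ^ q = -(a + b) := fun a b ha hb =>
    herm_T_closed hPP hK ((hmemFT a).mp ha) ((hmemFT b).mp hb)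
  have inner0 : ∑ b ∈ FT, n 0 * (n b * n (-(0 + b))) = 1 + (q - 1) * ((q + 1) * (q + 1)) := by
    have hterm : ∀ b ∈ FT.erase 0, n 0 * (n b * n (-(0 + b))) = (q + 1) * (q + 1) := by
      intro b hb
      have hb0 : b ≠ 0 := Finset.ne_of_mem_erase hb
      have hbFT : b ∈ FT := Finset.mem_of_mem_erase hb
      rw [n0, nt b ((hmemFT b).mp hbFT) hb0, one_mul,
        nt (-(0 + b)) (hclosed 0 b h0FT hbFT) (by simpa using hb0)]
    rw [← Finset.add_sum_erase _ _ h0FT, Finset.sum_congr rfl hterm, Finset.sum_const,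
      Finset.card_erase_of_mem h0FT, hcardFT, smul_eq_mul]
    simp [n0]
  have innerA : ∀ a ∈ FT.erase 0, ∑ b ∈ FT, n a * (n b * n (-(a + b)))
      = (q + 1) * ((q + 1) + ((q + 1) + (q - 2) * ((q + 1) * (q + 1)))) := by
    intro a ha
    have ha0 : a ≠ 0 := Finset.ne_of_mem_erase ha
    have haFT : a ∈ FT := Finset.mem_of_mem_erase ha
    have hna : n a = q + 1 := nt a ((hmemFT a).mp haFT) ha0
    have hnega : (-a) ∈ FT := by
      rw [hmemFT]
      simpa using hclosed a 0 haFT h0FT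
    have hnega0 : (-a : K) ≠ 0 := by simpa using ha0
    have hnegaE : (-a) ∈ FT.erase 0 := Finset.mem_erase.mpr ⟨hnega0, hnega⟩
    have hterm : ∀ b ∈ (FT.erase 0).erase (-a), n b * n (-(a + b)) = (q + 1) * (q + 1) := by
      intro b hb
      have hbne : b ≠ -a := Finset.ne_of_mem_erase hb
      have hb0 : b ≠ 0 := Finset.ne_of_mem_erase (Finset.mem_of_mem_erase hb)
      have hbFT : b ∈ FT := Finset.mem_of_mem_erase (Finset.mem_of_mem_erase hb)
      have hab : a + b ≠ 0 := fun h => hbne (eq_neg_of_add_eq_zero_right h)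
      rw [nt b ((hmemFT b).mp hbFT) hb0,
        nt (-(a + b)) (hclosed a b haFT hbFT) (neg_ne_zero.mpr hab)]
    rw [← Finset.mul_sum, hna]
    congr 1
    rw [← Finset.add_sum_erase _ _ h0FT]
    congr 1
    · rw [n0, one_mul, add_zero, nt (-a) ((hmemFT _).mp hnega) hnega0]
    rw [← Finset.add_sum_erase _ _ hnegaE]
    congr 1
    · rw [nt (-a) ((hmemFT _).mp hnega) hnega0, add_neg_cancel, neg_zero, n0, mul_one]
    rw [Finset.sum_congr rfl hterm, Finset.sum_const, smul_eq_mul,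
      Finset.card_erase_of_mem hnegaE, Finset.card_erase_of_mem h0FT, hcardFT]
    have e : q - 1 - 1 = q - 2 := by clear * - hq2; omega
    rw [e]
  have htotal : S.card = 1 + (q - 1) * ((q + 1) * (q + 1))
      + (q - 1) * ((q + 1) * ((q + 1) + ((q + 1) + (q - 2) * ((q + 1) * (q + 1))))) := by
    rw [hsum, ← Finset.add_sum_erase _ _ h0FT, inner0,
      Finset.sum_congr rfl innerA, Finset.sum_const, smul_eq_mul,
      Finset.card_erase_of_mem h0FT, hcardFT]
  rw [htotal]
  exact herm_arith q hq2


end Hermitian2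

section Hermitian3

variable {K : Type*} [Field K] [Fintype K] {q : ℕ}

private theorem herm_hom (c : K) (v : Fin 3 → K) :
    (c • v) 0 ^ (q + 1) + (c • v) 1 ^ (q + 1) + (c • v) 2 ^ (q + 1)
      = c ^ (q + 1) * (v 0 ^ (q + 1) + v 1 ^ (q + 1) + v 2 ^ (q + 1)) := by
  simp only [Pi.smul_apply, smul_eq_mul, mul_pow]
  ring

private theorem herm_proj_count (hq2 : 2 ≤ q) (hK : Fintype.card K = q ^ 2) :
    Nat.card {v : Fin 3 → K // v ≠ 0 ∧
        v 0 ^ (q + 1) + v 1 ^ (q + 1) + v 2 ^ (q + 1) = 0}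
      = Nat.card {P : ℙ K (Fin 3 → K) //
          P.rep 0 ^ (q + 1) + P.rep 1 ^ (q + 1) + P.rep 2 ^ (q + 1) = 0} * (q ^ 2 - 1) := by
  classical
  set cond : (Fin 3 → K) → Prop := fun v =>
    v 0 ^ (q + 1) + v 1 ^ (q + 1) + v 2 ^ (q + 1) = 0 with hcond
  have hG : Function.Bijective (fun Pa : {P : ℙ K (Fin 3 → K) // cond P.rep} × Kˣ =>
      (⟨(Pa.2 : K) • Pa.1.1.rep, ⟨smul_ne_zero (Units.ne_zero Pa.2) Pa.1.1.rep_nonzero, by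
        have h := Pa.1.2
        simp only [hcond] at h ⊢
        rw [herm_hom, h, mul_zero]⟩⟩ :
        {v : Fin 3 → K // v ≠ 0 ∧ cond v})) := by
    constructor
    · rintro ⟨⟨P, hP⟩, a⟩ ⟨⟨P', hP'⟩, a'⟩ h
      simp only [Subtype.mk.injEq] at h
      have hPP' : P = P' := by
        rw [← P.mk_rep, ← P'.mk_rep]
        rw [Projectivization.mk_eq_mk_iff]
        refine ⟨a⁻¹ * a', ?_⟩
        rw [Units.smul_def, Units.val_mul, mul_smul]
        rw [show ((a' : K) • P'.rep) = (a : K) • P.rep from h.symm]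
        rw [← mul_smul, Units.val_inv_eq_inv_val, inv_mul_cancel₀ (Units.ne_zero a), one_smul]
      subst hPP'
      have ha : a = a' := by
        obtain ⟨i, hi⟩ := Function.ne_iff.mp P.rep_nonzero
        have := congrFun h i
        simp only [Pi.smul_apply, smul_eq_mul] at this
        exact Units.ext (mul_right_cancel₀ (by simpa using hi) this)
      rw [ha]
    · rintro ⟨v, hv0, hv⟩
      set P : ℙ K (Fin 3 → K) := Projectivization.mk K v hv0 with hPdef
      obtain ⟨a, ha⟩ : ∃ a : Kˣ, a • v = P.rep :=
        (Projectivization.mk_eq_mk_iff K _ _ P.rep_nonzero hv0).mp (P.mk_rep)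
      have hcondP : cond P.rep := by
        rw [← ha, Units.smul_def]
        simp only [hcond] at hv ⊢
        rw [herm_hom, hv, mul_zero]
      refine ⟨(⟨⟨P, hcondP⟩, a⁻¹⟩ : {P : ℙ K (Fin 3 → K) // cond P.rep} × Kˣ), ?_⟩
      apply Subtype.ext
      simp only
      rw [← ha, Units.smul_def, ← mul_smul, Units.val_inv_eq_inv_val,
        inv_mul_cancel₀ (Units.ne_zero a), one_smul]
  rw [← Nat.card_congr (Equiv.ofBijective _ hG), Nat.card_prod,
    Nat.card_eq_fintype_card (α := Kˣ), Fintype.card_units, hK]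

private theorem herm_key (hPP : ∃ p k : ℕ, p.Prime ∧ 0 < k ∧ p ^ k = q)
    (hK : Fintype.card K = q ^ 2) (hq2 : 2 ≤ q) :
    Nat.card {P : ℙ K (Fin 3 → K) //
        P.rep 0 ^ (q + 1) + P.rep 1 ^ (q + 1) + P.rep 2 ^ (q + 1) = 0} = q ^ 3 + 1 := by
  classical
  have h1 := herm_affine hPP hK hq2
  have h2 := herm_proj_count hq2 hK
  -- card of nonzero solutions = total - 1
  have h3 : Nat.card {v : Fin 3 → K // v ≠ 0 ∧
      v 0 ^ (q + 1) + v 1 ^ (q + 1) + v 2 ^ (q + 1) = 0} + 1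
      = Nat.card {v : Fin 3 → K //
        v 0 ^ (q + 1) + v 1 ^ (q + 1) + v 2 ^ (q + 1) = 0} := by
    rw [Nat.card_eq_fintype_card, Nat.card_eq_fintype_card, Fintype.card_subtype,
      Fintype.card_subtype]
    have h0mem : (0 : Fin 3 → K) ∈ Finset.univ.filter (fun v : Fin 3 → K =>
        v 0 ^ (q + 1) + v 1 ^ (q + 1) + v 2 ^ (q + 1) = 0) := by
      simp [zero_pow (Nat.succ_ne_zero q)]
    have : Finset.univ.filter (fun v : Fin 3 → K =>
        v ≠ 0 ∧ v 0 ^ (q + 1) + v 1 ^ (q + 1) + v 2 ^ (q + 1) = 0)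
        = (Finset.univ.filter (fun v : Fin 3 → K =>
            v 0 ^ (q + 1) + v 1 ^ (q + 1) + v 2 ^ (q + 1) = 0)).erase 0 := by
      ext v
      simp only [Finset.mem_filter, Finset.mem_univ, true_and, Finset.mem_erase]
    rw [this, Finset.card_erase_of_mem h0mem]
    have hpos : 0 < (Finset.univ.filter (fun v : Fin 3 → K =>
        v 0 ^ (q + 1) + v 1 ^ (q + 1) + v 2 ^ (q + 1) = 0)).card :=
      Finset.card_pos.mpr ⟨0, h0mem⟩
    exact Nat.sub_add_cancel hpos
  rw [h2] at h3
  have hq21 : 0 < q ^ 2 - 1 := by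
    clear h1 h2 h3
    have h : q ^ 2 = q * q := sq q
    have h2' : 2 * 2 ≤ q * q := Nat.mul_le_mul hq2 hq2
    omega
  have hkey : Nat.card {P : ℙ K (Fin 3 → K) //
      P.rep 0 ^ (q + 1) + P.rep 1 ^ (q + 1) + P.rep 2 ^ (q + 1) = 0} * (q ^ 2 - 1) + 1
      = 1 + (q ^ 2 - 1) * (q ^ 3 + 1) := h3.trans h1
  rw [add_comm _ 1] at hkey
  have hkey2 := Nat.add_left_cancel hkey
  rw [mul_comm] at hkey2
  exact Nat.eq_of_mul_eq_mul_left hq21 hkey2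

end Hermitian3

private theorem herm_genus_arith (q : ℕ) (hq2 : 2 ≤ q) :
    1 + q ^ 2 + 2 * q * (q * (q - 1) / 2) = q ^ 3 + 1 := by
  have hdvd : 2 ∣ q * (q - 1) := by
    rw [mul_comm]
    have := Nat.even_mul_succ_self (q - 1)
    rwa [Nat.sub_add_cancel (by omega), even_iff_two_dvd] at this
  have h1 : 2 * q * (q * (q - 1) / 2) = q * (q * (q - 1)) := by
    rw [mul_comm 2 q, mul_assoc, Nat.mul_div_cancel' hdvd]
  rw [h1]
  obtain ⟨r, rfl⟩ : ∃ r, q = r + 2 := ⟨q - 2, by omega⟩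
  have e1 : r + 2 - 1 = r + 1 := by omega
  rw [e1]
  ring

/-- The Hermitian curve `x^{q+1} + y^{q+1} + z^{q+1} = 0` over `𝔽_{q²}` has exactly
`1 + q² + 2q·g` rational points, where `g = q(q-1)/2` is its genus; that is, its number
of `𝔽_{q²}`-points equals `q³ + 1`. -/
theorem card_hermitian_curve (K : Type*) [Field K] [Fintype K] (q : ℕ)
    (hq : IsPrimePow q) (hK : Fintype.card K = q ^ 2) :
    Nat.card {P : ℙ K (Fin 3 → K) //
        (P.rep 0) ^ (q + 1) + (P.rep 1) ^ (q + 1) + (P.rep 2) ^ (q + 1) = 0}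
      = 1 + q ^ 2 + 2 * q * (q * (q - 1) / 2) ∧
    Nat.card {P : ℙ K (Fin 3 → K) //
        (P.rep 0) ^ (q + 1) + (P.rep 1) ^ (q + 1) + (P.rep 2) ^ (q + 1) = 0}
      = q ^ 3 + 1 := by
  obtain ⟨p, k, hp, hk, hpk⟩ := hq
  have hp' : p.Prime := hp.nat_prime
  have hq2 : 2 ≤ q := by
    rw [← hpk]
    calc 2 ≤ p := hp'.two_le
    _ ≤ p ^ k := Nat.le_self_pow (by omega) p
  have key := herm_key ⟨p, k, hp', hk, hpk⟩ hK hq2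
  exact ⟨key.trans (herm_genus_arith q hq2).symm, key⟩
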